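/- Let k ≥ 2 and, for a finite simple graph G, let G⋆K_k denote the simple graph on the vertex set V(G) × {1,…,k} in which (u,i) and (v,j) are adjacent if and only if either uv is an edge of G, or u = v and i ≠ j (each vertex of G is replaced by a clique of size k and each edge of G by a complete bipartite graph between the corresponding cliques; this is the lexicographic product of G with K_k). Then for all finite simple graphs G and H, G contains H as an induced subgraph if and only if G⋆K_k contains H⋆K_k as an induced subgraph; equivalently, G is H-free if and only if G⋆K_k is (H⋆K_k)-free. -/

import Mathlib

/-- The lexicographic product of `G` with the complete graph `K_k`: each vertex of `G` is
replaced by a clique of size `k` and each edge of `G` by a complete bipartite graph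
between the corresponding cliques. -/
def lexCompleteProd {V : Type*} (G : SimpleGraph V) (k : ℕ) :
    SimpleGraph (V × Fin k) where
  Adj x y := G.Adj x.1 y.1 ∨ (x.1 = y.1 ∧ x.2 ≠ y.2)
  symm := by
    constructor
    rintro x y (h | ⟨h1, h2⟩)
    · exact Or.inl (G.symm.symm _ _ h)
    · exact Or.inr ⟨h1.symm, h2.symm⟩
  loopless := by
    constructor
    rintro x (h | ⟨-, h⟩)
    · exact G.loopless.irrefl x.1 h
    · exact h rfl

/-- Let `k ≥ 2`. For all finite simple graphs `G` and `H`, `G` contains `H` as an induced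
subgraph if and only if `G ⋆ K_k` contains `H ⋆ K_k` as an induced subgraph. -/
theorem induced_iff_lexCompleteProd_induced {V W : Type*} [Fintype V] [Fintype W]
    (k : ℕ) (hk : 2 ≤ k) (G : SimpleGraph V) (H : SimpleGraph W) :
    Nonempty (H ↪g G) ↔ Nonempty (lexCompleteProd H k ↪g lexCompleteProd G k) := by
  classical
  have hkpos : 0 < k := lt_of_lt_of_le two_pos hk
  constructor
  · rintro ⟨f⟩
    refine ⟨⟨⟨fun p => (f p.1, p.2), ?_⟩, ?_⟩⟩
    · rintro ⟨w, i⟩ ⟨w', j⟩ h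
      simp only [Prod.mk.injEq] at h
      exact Prod.ext (f.injective h.1) h.2
    · rintro ⟨w, i⟩ ⟨w', j⟩
      simp only [lexCompleteProd, Function.Embedding.coeFn_mk]
      show G.Adj (f w) (f w') ∨ (f w = f w' ∧ i ≠ j) ↔ _
      rw [f.map_adj_iff, f.injective.eq_iff]
  · rintro ⟨φ⟩
    -- candidate sets
    set T : W → Finset V := fun w => Finset.image (fun i => (φ (w, i)).1) Finset.univ with hT
    -- Hall's condition
    have hall : ∀ s : Finset W, s.card ≤ (s.biUnion T).card := by
      intro s
      have hinj : Set.InjOn (fun p => φ p) ↑(s ×ˢ (Finset.univ : Finset (Fin k))) := by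
        intro a _ b _ h
        exact φ.injective h
      have hmaps : ∀ p ∈ s ×ˢ (Finset.univ : Finset (Fin k)),
          φ p ∈ (s.biUnion T) ×ˢ (Finset.univ : Finset (Fin k)) := by
        intro p hp
        rw [Finset.mem_product] at hp ⊢
        refine ⟨Finset.mem_biUnion.2 ⟨p.1, hp.1, ?_⟩, Finset.mem_univ _⟩
        exact Finset.mem_image.2 ⟨p.2, Finset.mem_univ _, rfl⟩
      have := Finset.card_le_card_of_injOn _ hmaps hinj
      rw [Finset.card_product, Finset.card_product, Finset.card_univ, Fintype.card_fin] at this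
      exact Nat.le_of_mul_le_mul_right this hkpos
    obtain ⟨f, hfinj, hfmem⟩ := (Finset.all_card_le_biUnion_card_iff_exists_injective T).1 hall
    -- for each w pick an index
    have hidx : ∀ w, ∃ i : Fin k, (φ (w, i)).1 = f w := by
      intro w
      obtain ⟨i, _, hi⟩ := Finset.mem_image.1 (hfmem w)
      exact ⟨i, hi⟩
    choose idx hidx using hidx
    refine ⟨⟨⟨f, hfinj⟩, ?_⟩⟩
    intro w w'
    simp only [Function.Embedding.coeFn_mk]
    constructor
    · intro hadj
      by_contra hH
      have hne : w ≠ w' := fun h => G.loopless.irrefl (f w) (h ▸ hadj)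
      have : ¬ (lexCompleteProd H k).Adj (w, idx w) (w', idx w') := by
        rintro (h | ⟨h1, -⟩)
        · exact hH h
        · exact hne h1
      apply this
      rw [← φ.map_adj_iff]
      left
      rw [hidx w, hidx w']
      exact hadj
    · intro hH
      have hne : w ≠ w' := fun h => H.loopless.irrefl w (h ▸ hH)
      have : (lexCompleteProd G k).Adj (φ (w, idx w)) (φ (w', idx w')) := by
        rw [φ.map_adj_iff]
        exact Or.inl hH
      rcases this with h | ⟨h1, -⟩
      · rwa [hidx w, hidx w'] at h
      · exact absurd (hidx w ▸ hidx w' ▸ h1) (hfinj.ne_iff.2 hne)
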